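/- Let G be a finite multigraph, A a finite abelian group, and b : V(G) → A locally zero-sum on G. Let F be a b-compatible bond of G (a bond such that G−F is b-compatible), with maximal element e_F under a fixed total order ≺ on E(G), and let B = F ∖ {e_F}. If S ⊆ E(G) contains B, e_F ∉ S, and G−S is b-compatible, then G−S−e_F is also b-compatible. -/

import Mathlib

open Finset

attribute [local instance] Classical.propDecidable

universe u v w

/-- Adjacency through a present edge in the spanning subgraph with edge predicate `ok`. -/
def edgeRel {V E : Type*} (head tail : E → V) (ok : E → Prop) (u v : V) : Prop :=
  ∃ e, ok e ∧ ((head e = u ∧ tail e = v) ∨ (head e = v ∧ tail e = u))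

/-- Reachability (same connected component) in the spanning subgraph. -/
def Reach {V E : Type*} (head tail : E → V) (ok : E → Prop) : V → V → Prop :=
  Relation.EqvGen (edgeRel head tail ok)

/-- Number of connected components of the spanning subgraph. -/
noncomputable def ncomp {V E : Type*} (head tail : E → V) (ok : E → Prop) : ℕ :=
  Nat.card (Quotient (Relation.EqvGen.setoid (edgeRel head tail ok)))

/-- Boundary of an edge-valued function, via the orientation `head`/`tail`. -/
noncomputable def bdry {V E A : Type*} [Fintype E] [AddCommGroup A]
    (head tail : E → V) (f : E → A) (v : V) : A :=
  ∑ e : E, ((if head e = v then f e else 0) - (if tail e = v then f e else 0))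

/-- Boundary of an edge-valued function on the spanning subgraph with edges `ok`. -/
noncomputable def bdrySub {V E A : Type*} [Fintype E] [AddCommGroup A]
    (head tail : E → V) (ok : E → Prop) (f : {e : E // ok e} → A) (v : V) : A :=
  ∑ e : {e : E // ok e}, ((if head e.1 = v then f e else 0) - (if tail e.1 = v then f e else 0))

/-- `b` sums to zero over every connected component of the spanning subgraph
(`b`-compatibility / locally zero-sum). -/
def Compatible {V E A : Type*} [Fintype V] [AddCommGroup A]
    (head tail : E → V) (ok : E → Prop) (b : V → A) : Prop :=
  ∀ v : V, (∑ u : V, if Reach head tail ok u v then b u else 0) = 0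

/-- A bond: a minimal nonempty edge set whose deletion changes the number of components,
equivalently a minimal nonempty edge cut. -/
def IsBond {V E : Type*} (head tail : E → V) (F : Finset E) : Prop :=
  F.Nonempty ∧ ncomp head tail (fun e => e ∉ F) ≠ ncomp head tail (fun _ => True) ∧
    ∀ F' : Finset E, F' ⊂ F → ncomp head tail (fun e => e ∉ F') = ncomp head tail (fun _ => True)

/-- Cycle rank `m(G-S) = |E(G-S)| - |V| + c(G-S)` of the spanning subgraph `G-S`. -/
noncomputable def cycRank {V E : Type*} [Fintype V] [Fintype E]
    (head tail : E → V) (S : Finset E) : ℕ :=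
  (Fintype.card E - S.card) + ncomp head tail (fun e => e ∉ S) - Fintype.card V

/-- A `b`-compatible bond. -/
def IsCBond {V E A : Type*} [Fintype V] [AddCommGroup A]
    (head tail : E → V) (b : V → A) (F : Finset E) : Prop :=
  IsBond head tail F ∧ Compatible head tail (fun e => e ∉ F) b

/-- A `b`-compatible broken bond w.r.t. the total order `lo` on edges. -/
def IsCBrokenBond {V E A : Type*} [Fintype V] [AddCommGroup A]
    (head tail : E → V) (lo : LinearOrder E) (b : V → A) (B : Finset E) : Prop :=
  ∃ F : Finset E, IsCBond head tail b F ∧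
    ∃ hne : F.Nonempty, B = F.erase (@Finset.max' E lo F hne)

/-- The signless coefficient `a_i(G,b)`: the number of `i`-edge subsets `S` with `G-S`
`b`-compatible and `S` containing no `b`-compatible broken bond. -/
noncomputable def aCoeff {V E A : Type*} [Fintype V] [Fintype E] [AddCommGroup A]
    (head tail : E → V) (lo : LinearOrder E) (b : V → A) (i : ℕ) : ℕ :=
  Nat.card {S : Finset E // S.card = i ∧ Compatible head tail (fun e => e ∉ S) b ∧
    ∀ B : Finset E, IsCBrokenBond head tail lo b B → ¬ B ⊆ S}

/-- Adjacency inside the induced subgraph on the vertex set `X`. -/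
def edgeRelIn {V E : Type*} (head tail : E → V) (X : Set V) (u v : V) : Prop :=
  ∃ e, head e ∈ X ∧ tail e ∈ X ∧ ((head e = u ∧ tail e = v) ∨ (head e = v ∧ tail e = u))

/-- Reachability within the induced subgraph on `X`. -/
def ReachIn {V E : Type*} (head tail : E → V) (X : Set V) : V → V → Prop :=
  Relation.EqvGen (edgeRelIn head tail X)

def setoidOn {V E : Type*} (head tail : E → V) (X : Set V) : Setoid {v : V // v ∈ X} :=
  ⟨fun a b => ReachIn head tail X a.1 b.1,
   ⟨fun a => Relation.EqvGen.refl a.1, fun h => Relation.EqvGen.symm _ _ h, fun h h' => Relation.EqvGen.trans _ _ _ h h'⟩⟩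

/-- Number of connected components of the induced subgraph on `X`. -/
noncomputable def ncompOn {V E : Type*} (head tail : E → V) (X : Set V) : ℕ :=
  Nat.card (Quotient (setoidOn head tail X))

/-- `X ∈ Λ(G)`: `X` nonempty, `G[X]` connected and `c(G-X) = c(G)`. -/
def InLambda {V E : Type*} [Fintype V] (head tail : E → V) (X : Finset V) : Prop :=
  X.Nonempty ∧ (∀ u ∈ X, ∀ v ∈ X, ReachIn head tail (↑X) u v) ∧
    ncompOn head tail ((↑X : Set V)ᶜ) = ncomp head tail (fun _ => True)


section Helpers

variable {V E A : Type*}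

lemma reach_refl (head tail : E → V) (ok : E → Prop) (a : V) : Reach head tail ok a a :=
  Relation.EqvGen.refl a

lemma reach_symm {head tail : E → V} {ok : E → Prop} {a b : V}
    (h : Reach head tail ok a b) : Reach head tail ok b a :=
  Relation.EqvGen.symm a b h

lemma reach_trans {head tail : E → V} {ok : E → Prop} {a b c : V}
    (h : Reach head tail ok a b) (h' : Reach head tail ok b c) : Reach head tail ok a c :=
  Relation.EqvGen.trans a b c h h'

lemma reach_equiv (head tail : E → V) (ok : E → Prop) : Equivalence (Reach head tail ok) :=
  ⟨reach_refl head tail ok, reach_symm, reach_trans⟩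

lemma reach_mono {head tail : E → V} {p q : E → Prop} (h : ∀ e, p e → q e)
    {u v : V} (hr : Reach head tail p u v) : Reach head tail q u v :=
  Relation.EqvGen.mono (fun a b (⟨e, he, ho⟩ : edgeRel head tail p a b) =>
    (⟨e, h e he, ho⟩ : edgeRel head tail q a b)) u v hr

lemma eqvGen_le {α : Type*} {r Q : α → α → Prop} (hQ : Equivalence Q)
    (h : ∀ a b, r a b → Q a b) : ∀ a b, Relation.EqvGen r a b → Q a b := by
  intro a b hab
  induction hab with
  | rel a b h' => exact h a b h'
  | refl a => exact hQ.refl a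
  | symm a b _ ih => exact hQ.symm ih
  | trans a b c _ _ ih1 ih2 => exact hQ.trans ih1 ih2

lemma reach_edge {head tail : E → V} {ok : E → Prop} {e : E} (he : ok e) :
    Reach head tail ok (head e) (tail e) :=
  Relation.EqvGen.rel _ _ ⟨e, he, Or.inl ⟨rfl, rfl⟩⟩

lemma ncomp_congr (head tail : E → V) (p q : E → Prop)
    (h : ∀ u v, Reach head tail p u v ↔ Reach head tail q u v) :
    ncomp head tail p = ncomp head tail q := by
  unfold ncomp
  have : Relation.EqvGen.setoid (edgeRel head tail p) =
      Relation.EqvGen.setoid (edgeRel head tail q) := by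
    apply Setoid.ext
    intro a b
    exact h a b
  rw [this]

lemma sum_if_congr [Fintype V] [AddCommGroup A] (b : V → A) (P Q : V → Prop)
    (h : ∀ u, P u ↔ Q u) :
    (∑ u : V, if P u then b u else 0) = (∑ u : V, if Q u then b u else 0) :=
  Finset.sum_congr rfl fun u _ => if_congr (h u) rfl rfl

lemma sum_if_split [Fintype V] [AddCommGroup A] (b : V → A) (P Q1 Q2 : V → Prop)
    (h : ∀ u, P u ↔ Q1 u ∨ Q2 u) (hd : ∀ u, ¬(Q1 u ∧ Q2 u)) :
    (∑ u : V, if P u then b u else 0) =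
      (∑ u : V, if Q1 u then b u else 0) + (∑ u : V, if Q2 u then b u else 0) := by
  rw [← Finset.sum_add_distrib]
  apply Finset.sum_congr rfl
  intro u _
  by_cases h1 : Q1 u <;> by_cases h2 : Q2 u
  · exact absurd ⟨h1, h2⟩ (hd u)
  · simp [h1, h2, (h u).mpr (Or.inl h1)]
  · simp [h1, h2, (h u).mpr (Or.inr h2)]
  · have : ¬ P u := fun hp => ((h u).mp hp).elim h1 h2
    simp [h1, h2, this]

private def PAnd (p q : Prop) : Prop := p ∧ q

private lemma pand_iff {p q : Prop} : PAnd p q ↔ p ∧ q := Iff.rfl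

lemma sum_closed [Fintype V] [AddCommGroup A] (R : V → V → Prop) (hR : Equivalence R)
    (b : V → A) (hcomp : ∀ v, (∑ u : V, if R u v then b u else 0) = 0)
    (P : V → Prop) (hP : ∀ u v, R u v → P u → P v) :
    (∑ u : V, if P u then b u else 0) = 0 := by
  classical
  generalize hn : (Finset.univ.filter P).card = n
  induction n using Nat.strong_induction_on generalizing P with
  | _ n ih =>
    by_cases hex : ∃ v, P v
    · obtain ⟨v, hv⟩ := hex
      set P' : V → Prop := fun u => PAnd (P u) (¬ R u v) with hP'def
      have hsplit : (∑ u : V, if P u then b u else 0) =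
          (∑ u : V, if R u v then b u else 0) + (∑ u : V, if P' u then b u else 0) := by
        apply sum_if_split
        · intro u
          constructor
          · intro hu
            by_cases h : R u v
            · exact Or.inl h
            · exact Or.inr (pand_iff.mpr ⟨hu, h⟩)
          · rintro (h | hu)
            · exact hP v u (hR.symm h) hv
            · exact (pand_iff.mp hu).1
        · rintro u ⟨h1, h2⟩
          exact (pand_iff.mp h2).2 h1
      have hsub : Finset.univ.filter P' ⊂ Finset.univ.filter P := by
        constructor
        · intro u hu
          simp only [Finset.mem_filter] at hu ⊢
          exact ⟨hu.1, (pand_iff.mp hu.2).1⟩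
        · intro hcon
          have hv' : v ∈ Finset.univ.filter P := by simp [hv]
          have := hcon hv'
          simp only [Finset.mem_filter, hP'def] at this
          exact (pand_iff.mp this.2).2 (hR.refl v)
      have hlt : (Finset.univ.filter P').card < n := hn ▸ Finset.card_lt_card hsub
      have hP'closed : ∀ u w, R u w → P' u → P' w := by
        intro u w huw hu
        obtain ⟨hu1, hu2⟩ := pand_iff.mp hu
        exact pand_iff.mpr ⟨hP u w huw hu1, fun h => hu2 (hR.trans huw h)⟩
      have := ih _ hlt P' hP'closed rfl
      rw [hsplit, hcomp v, this, add_zero]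
    · push_neg at hex
      apply Finset.sum_eq_zero
      intro u _
      simp [hex u]

end Helpers

/-- adding back the maximal edge of a `b`-compatible bond whose broken bond
lies in `S` preserves `b`-compatibility after deletion. -/
theorem stmt10 {V E A : Type*} [Fintype V] [Fintype E] [AddCommGroup A]
    (head tail : E → V) (lo : LinearOrder E) (b : V → A)
    (hb : Compatible head tail (fun _ => True) b)
    (F : Finset E) (hF : IsCBond head tail b F) (hne : F.Nonempty)
    (S : Finset E) (hBS : F.erase (@Finset.max' E lo F hne) ⊆ S)
    (heS : @Finset.max' E lo F hne ∉ S)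
    (hS : Compatible head tail (fun e => e ∉ S) b) :
    Compatible head tail (fun e => e ∉ insert (@Finset.max' E lo F hne) S) b := by
  set eF := @Finset.max' E lo F hne with heF
  set h := head eF with hh
  set t := tail eF with ht
  suffices key : ∀ ok' : E → Prop, (∀ e : E, ok' e ↔ (¬ e = eF ∧ ¬ e ∈ S)) →
      Compatible head tail ok' b by
    refine key _ ?_
    intro e
    constructor
    · intro hni
      exact ⟨fun h' => hni (h' ▸ Finset.mem_insert_self _ _),
             fun h' => hni (Finset.mem_insert_of_mem h')⟩
    · rintro ⟨h1, h2⟩ hmem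
      rcases Finset.mem_insert.mp hmem with h' | h'
      · exact h1 h'
      · exact h2 h'
  intro ok' hok'
  set R' := Reach head tail ok' with hR'
  set RS := Reach head tail (fun e => e ∉ S) with hRS
  set RF := Reach head tail (fun e => e ∉ F) with hRF
  have hE' : Equivalence R' := reach_equiv _ _ _
  have hES : Equivalence RS := reach_equiv _ _ _
  have hEF : Equivalence RF := reach_equiv _ _ _
  have heFF : eF ∈ F := Finset.max'_mem F hne
  have hFsub : ∀ e, e ∈ F → e = eF ∨ e ∈ S := by
    intro e he
    by_cases h' : e = eF
    · exact Or.inl h'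
    · exact Or.inr (hBS (Finset.mem_erase.mpr ⟨h', he⟩))
  have hR'F : ∀ u v, R' u v → RF u v := by
    intro u v
    apply reach_mono
    intro e he hcon
    obtain ⟨h1, h2⟩ := (hok' e).mp he
    rcases hFsub e hcon with h' | h'
    · exact h1 h'
    · exact h2 h'
  have hR'S : ∀ u v, R' u v → RS u v := by
    intro u v
    apply reach_mono
    intro e he
    exact ((hok' e).mp he).2
  -- the one-edge decomposition of RS
  have hQS : ∀ u v, RS u v ↔ (R' u v ∨ (R' u h ∧ R' t v) ∨ (R' u t ∧ R' h v)) := by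
    intro u v
    constructor
    · revert u v
      apply eqvGen_le
      · constructor
        · intro a
          exact Or.inl (hE'.refl a)
        · rintro u v (h1 | ⟨h1, h2⟩ | ⟨h1, h2⟩)
          · exact Or.inl (hE'.symm h1)
          · exact Or.inr (Or.inr ⟨hE'.symm h2, hE'.symm h1⟩)
          · exact Or.inr (Or.inl ⟨hE'.symm h2, hE'.symm h1⟩)
        · rintro u v w (h1 | ⟨h1, h2⟩ | ⟨h1, h2⟩) (h3 | ⟨h3, h4⟩ | ⟨h3, h4⟩)
          · exact Or.inl (hE'.trans h1 h3)
          · exact Or.inr (Or.inl ⟨hE'.trans h1 h3, h4⟩)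
          · exact Or.inr (Or.inr ⟨hE'.trans h1 h3, h4⟩)
          · exact Or.inr (Or.inl ⟨h1, hE'.trans h2 h3⟩)
          · exact Or.inl (hE'.trans h1 (hE'.trans (hE'.symm (hE'.trans h2 h3)) h4))
          · exact Or.inl (hE'.trans h1 h4)
          · exact Or.inr (Or.inr ⟨h1, hE'.trans h2 h3⟩)
          · exact Or.inl (hE'.trans h1 h4)
          · exact Or.inl (hE'.trans h1 (hE'.trans (hE'.symm (hE'.trans h2 h3)) h4))
      · rintro a c ⟨e, he, (⟨rfl, rfl⟩ | ⟨rfl, rfl⟩)⟩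
        · by_cases hcase : e = eF
          · subst hcase
            exact Or.inr (Or.inl ⟨hE'.refl h, hE'.refl t⟩)
          · exact Or.inl (Relation.EqvGen.rel _ _
              ⟨e, (hok' e).mpr ⟨hcase, he⟩, Or.inl ⟨rfl, rfl⟩⟩)
        · by_cases hcase : e = eF
          · subst hcase
            exact Or.inr (Or.inr ⟨hE'.refl t, hE'.refl h⟩)
          · exact Or.inl (Relation.EqvGen.rel _ _
              ⟨e, (hok' e).mpr ⟨hcase, he⟩, Or.inr ⟨rfl, rfl⟩⟩)
    · rintro (h1 | ⟨h1, h2⟩ | ⟨h1, h2⟩)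
      · exact hR'S _ _ h1
      · exact hES.trans (hR'S _ _ h1) (hES.trans (reach_edge heS) (hR'S _ _ h2))
      · exact hES.trans (hR'S _ _ h1)
          (hES.trans (hES.symm (reach_edge heS)) (hR'S _ _ h2))
  -- the endpoints of eF are separated in G - F
  have hsep : ¬ RF h t := by
    intro hcon
    have hlt : F.erase eF ⊂ F := Finset.erase_ssubset heFF
    have hmin := hF.1.2.2 (F.erase eF) hlt
    have hchg := hF.1.2.1
    apply hchg
    rw [← hmin]
    apply ncomp_congr
    intro u v
    constructor
    · intro hr
      apply reach_mono (q := fun e => e ∉ F.erase eF) _ hr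
      intro e he hcon'
      exact he (Finset.mem_of_mem_erase hcon')
    · revert u v
      apply eqvGen_le (Q := RF) hEF
      rintro a c ⟨e, he, (⟨rfl, rfl⟩ | ⟨rfl, rfl⟩)⟩
      · by_cases hcase : e ∈ F
        · have heq : e = eF := by
            by_contra hne'
            exact he (Finset.mem_erase.mpr ⟨hne', hcase⟩)
          subst heq
          exact hcon
        · exact Relation.EqvGen.rel _ _ ⟨e, hcase, Or.inl ⟨rfl, rfl⟩⟩
      · by_cases hcase : e ∈ F
        · have heq : e = eF := by
            by_contra hne'
            exact he (Finset.mem_erase.mpr ⟨hne', hcase⟩)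
          subst heq
          exact hEF.symm hcon
        · exact Relation.EqvGen.rel _ _ ⟨e, hcase, Or.inr ⟨rfl, rfl⟩⟩
  -- sum over the R'-component of h is zero
  have hsumC1 : (∑ u : V, if R' u h then b u else 0) = 0 := by
    have hFh := hF.2 h
    have hsplit : (∑ u : V, if RF u h then b u else 0) =
        (∑ u : V, if R' u h then b u else 0) +
        (∑ u : V, if PAnd (RF u h) (¬ R' u h) then b u else 0) := by
      apply sum_if_split
      · intro u
        constructor
        · intro hu
          by_cases h' : R' u h
          · exact Or.inl h'
          · exact Or.inr (pand_iff.mpr ⟨hu, h'⟩)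
        · rintro (h' | h')
          · exact hR'F _ _ h'
          · exact (pand_iff.mp h').1
      · rintro u ⟨h1, h2⟩
        exact (pand_iff.mp h2).2 h1
    have hT : (∑ u : V, if PAnd (RF u h) (¬ R' u h) then b u else 0) = 0 := by
      apply sum_closed RS hES b hS
      intro u w huw hu
      obtain ⟨hu1, hu2⟩ := pand_iff.mp hu
      rcases (hQS u w).mp huw with h1 | ⟨h1, h2⟩ | ⟨h1, h2⟩
      · refine pand_iff.mpr ⟨?_, ?_⟩
        · exact hEF.trans (hEF.symm (hR'F _ _ h1)) hu1
        · intro hcon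
          exact hu2 (hE'.trans h1 hcon)
      · exact absurd h1 hu2
      · exact absurd (hEF.trans (hEF.symm hu1) (hR'F _ _ h1)) hsep
    rw [hsplit, hT, add_zero] at hFh
    exact hFh
  -- main case analysis
  intro v
  by_cases hcase1 : R' h t
  · have hiff : ∀ u, RS u v ↔ R' u v := by
      intro u
      constructor
      · intro hr
        rcases (hQS u v).mp hr with h1 | ⟨h1, h2⟩ | ⟨h1, h2⟩
        · exact h1
        · exact hE'.trans h1 (hE'.trans hcase1 h2)
        · exact hE'.trans h1 (hE'.trans (hE'.symm hcase1) h2)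
      · intro hr
        exact hR'S _ _ hr
    rw [← sum_if_congr b _ _ hiff]
    exact hS v
  by_cases hcase2 : R' h v
  · rw [sum_if_congr b (fun u => R' u v) (fun u => R' u h)
      (fun u => ⟨fun hr => hE'.trans hr (hE'.symm hcase2), fun hr => hE'.trans hr hcase2⟩)]
    exact hsumC1
  by_cases hcase3 : R' t v
  · rw [sum_if_congr b (fun u => R' u v) (fun u => R' u t)
      (fun u => ⟨fun hr => hE'.trans hr (hE'.symm hcase3), fun hr => hE'.trans hr hcase3⟩)]
    have hSt := hS t
    have hsplit : (∑ u : V, if RS u t then b u else 0) =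
        (∑ u : V, if R' u t then b u else 0) + (∑ u : V, if R' u h then b u else 0) := by
      apply sum_if_split
      · intro u
        constructor
        · intro hr
          rcases (hQS u t).mp hr with h1 | ⟨h1, h2⟩ | ⟨h1, h2⟩
          · exact Or.inl h1
          · exact Or.inr h1
          · exact Or.inl h1
        · rintro (h' | h')
          · exact hR'S _ _ h'
          · exact (hQS u t).mpr (Or.inr (Or.inl ⟨h', hE'.refl t⟩))
      · rintro u ⟨h1, h2⟩
        exact hcase1 (hE'.trans (hE'.symm h2) h1)
    rw [hsplit, hsumC1, add_zero] at hSt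
    exact hSt
  · have hiff : ∀ u, RS u v ↔ R' u v := by
      intro u
      constructor
      · intro hr
        rcases (hQS u v).mp hr with h1 | ⟨h1, h2⟩ | ⟨h1, h2⟩
        · exact h1
        · exact absurd h2 hcase3
        · exact absurd h2 hcase2
      · intro hr
        exact hR'S _ _ hr
    rw [← sum_if_congr b _ _ hiff]
    exact hS v
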